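/- Meta-signals are strictly more powerful than signaling matchings alone (Example 1): Consider the instance with A = {a1,a2}, B = {b1,b2}, Ω = {ω1,ω2}, μ(ω1) = μ(ω2) = 1/2; agents' values: v_{a1}(b1|ω1)=v_{a1}(b1|ω2)=0, v_{a1}(b2|ω1)=−1, v_{a1}(b2|ω2)=2, v_{a2}(b1|·)=0, v_{a2}(b2|·)=1, v_{b1}(a1|·)=1, v_{b1}(a2|·)=0, v_{b2}(a1|·)=0, v_{b2}(a2|ω1)=−2, v_{b2}(a2|ω2)=1; principal utility u(a1,b1|ω)=1 for both worlds and u = 0 for all other pairs. Then: (i) the deterministic policy that in world ω_i sends meta-signal (ω_i, M1), where M1 = {(a1,b1),(a2,b2)}, is stable and yields expected utility 1; (ii) every stable policy of the form σ : Ω → Δ(𝓜) (i.e., whose meta-signals consist of the selected matching only) yields expected utility strictly less than 1. -/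

import Mathlib

open Finset

namespace MP

/-- A probability distribution on a finite type, as a nonnegative function summing to 1. -/
def IsDist {X : Type*} [Fintype X] (p : X → ℝ) : Prop :=
  (∀ x, 0 ≤ p x) ∧ ∑ x, p x = 1

/-- Expected value of `v : Ω → ℝ` under belief `p`. -/
noncomputable def eVal {Ω : Type*} [Fintype Ω] (v : Ω → ℝ) (p : Ω → ℝ) : ℝ :=
  ∑ ω, p ω * v ω

/-- A matching `M : A ≃ B` is stable with respect to belief `p`. -/
def StableAt {Ω A B : Type*} [Fintype Ω]
    (vA : A → B → Ω → ℝ) (vB : B → A → Ω → ℝ) (M : A ≃ B) (p : Ω → ℝ) : Prop :=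
  ∀ a b, eVal (vA a (M a)) p ≥ eVal (vA a b) p ∨ eVal (vB b (M.symm b)) p ≥ eVal (vB b a) p

/-- The principal's utility of matching `M` in world `ω`. -/
noncomputable def uMatch {Ω A B : Type*} [Fintype A]
    (u : A → B → Ω → ℝ) (M : A ≃ B) (ω : Ω) : ℝ :=
  ∑ a, u a (M a) ω

/-- A signaling policy: a distribution over meta-signals `S` for each world. -/
def IsPolicy {Ω S : Type*} [Fintype S] (σ : Ω → S → ℝ) : Prop :=
  ∀ ω, IsDist (σ ω)

/-- Marginal probability of meta-signal `s`. -/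
noncomputable def sigPr {Ω S : Type*} [Fintype Ω] (μ : Ω → ℝ) (σ : Ω → S → ℝ) (s : S) : ℝ :=
  ∑ ω, μ ω * σ ω s

/-- Posterior belief induced by meta-signal `s`. -/
noncomputable def post {Ω S : Type*} [Fintype Ω] (μ : Ω → ℝ) (σ : Ω → S → ℝ) (s : S) : Ω → ℝ :=
  fun ω => μ ω * σ ω s / sigPr μ σ s

/-- Expected utility of a policy, where `util s ω` is the principal's payoff
of meta-signal `s` in world `ω`. -/
noncomputable def polU {Ω S : Type*} [Fintype Ω] [Fintype S]
    (μ : Ω → ℝ) (σ : Ω → S → ℝ) (util : S → Ω → ℝ) : ℝ :=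
  ∑ ω, μ ω * ∑ s, σ ω s * util s ω

/-- Stability of a public policy with meta-signals in `G × (A ≃ B)`. -/
def StablePublic {Ω A B G : Type*} [Fintype Ω]
    (μ : Ω → ℝ) (vA : A → B → Ω → ℝ) (vB : B → A → Ω → ℝ)
    (σ : Ω → (G × (A ≃ B)) → ℝ) : Prop :=
  ∀ s : G × (A ≃ B), 0 < sigPr μ σ s → StableAt vA vB s.2 (post μ σ s)

/-- A (raw) preference profile: for each agent on either side, a `Bool`-valued
relation on the other side; `L.1 a y y' = true` means `y ⪯_a y'`. -/
abbrev Pref (A B : Type*) := (A → B → B → Bool) × (B → A → A → Bool)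

/-- `r` is a total preorder. -/
def TotalPre {X : Type*} (r : X → X → Bool) : Prop :=
  (∀ x y, r x y = true ∨ r y x = true) ∧
  ∀ x y z, r x y = true → r y z = true → r x z = true

/-- A preference profile assigns every agent a total preorder on the other side. -/
def ValidProfile {A B : Type*} (L : Pref A B) : Prop :=
  (∀ a, TotalPre (L.1 a)) ∧ (∀ b, TotalPre (L.2 b))

/-- `p` lies in the cell `C_⪯` of the profile `L`. -/
def InCell {Ω A B : Type*} [Fintype Ω] (vA : A → B → Ω → ℝ) (vB : B → A → Ω → ℝ)
    (L : Pref A B) (p : Ω → ℝ) : Prop :=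
  (∀ a y y', L.1 a y y' = true → eVal (vA a y) p ≤ eVal (vA a y') p) ∧
  (∀ b x x', L.2 b x x' = true → eVal (vB b x) p ≤ eVal (vB b x') p)

/-- An indicative policy: every meta-signal `(⪯, M)` sent with positive probability
consists of a genuine preference profile whose induced posterior lies in `C_⪯`. -/
def Indicative {Ω A B : Type*} [Fintype Ω]
    (μ : Ω → ℝ) (vA : A → B → Ω → ℝ) (vB : B → A → Ω → ℝ)
    (σ : Ω → (Pref A B × (A ≃ B)) → ℝ) : Prop :=
  ∀ s : Pref A B × (A ≃ B), 0 < sigPr μ σ s →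
    ValidProfile s.1 ∧ InCell vA vB s.1 (post μ σ s)

/-! ### Example 1: the concrete instance -/

/-- Worlds: `0 = ω₁`, `1 = ω₂`; uniform prior. -/
noncomputable def μex : Fin 2 → ℝ := fun _ => 1 / 2

/-- Values of the `A`-side agents (`a = 0` is `a₁`, `b = 0` is `b₁`, `ω = 0` is `ω₁`). -/
noncomputable def vAex : Fin 2 → Fin 2 → Fin 2 → ℝ := fun a b ω =>
  if a = 0 then (if b = 0 then 0 else if ω = 0 then -1 else 2)
  else (if b = 0 then 0 else 1)

/-- Values of the `B`-side agents. -/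
noncomputable def vBex : Fin 2 → Fin 2 → Fin 2 → ℝ := fun b a ω =>
  if b = 0 then (if a = 0 then 1 else 0)
  else (if a = 0 then 0 else if ω = 0 then -2 else 1)

/-- Principal's utility: `1` for the pair `(a₁, b₁)` and `0` otherwise. -/
noncomputable def uex : Fin 2 → Fin 2 → Fin 2 → ℝ := fun a b _ =>
  if a = 0 ∧ b = 0 then 1 else 0

/-- The matching `M₁ = {(a₁,b₁), (a₂,b₂)}`. -/
def M1 : Fin 2 ≃ Fin 2 := Equiv.refl (Fin 2)

/-- The deterministic policy with signal set `G = Ω` that, in world `ωᵢ`,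
sends the meta-signal `(ωᵢ, M₁)`. -/
noncomputable def σex : Fin 2 → (Fin 2 × (Fin 2 ≃ Fin 2)) → ℝ := fun ω s =>
  if s = (ω, M1) then 1 else 0


lemma univ_perm2 : (Finset.univ : Finset (Fin 2 ≃ Fin 2)) = {Equiv.refl (Fin 2), Equiv.swap 0 1} := by
  decide

lemma sum_perm2 (f : (Fin 2 ≃ Fin 2) → ℝ) :
    ∑ M, f M = f (Equiv.refl (Fin 2)) + f (Equiv.swap 0 1) := by
  rw [univ_perm2, Finset.sum_insert (by decide), Finset.sum_singleton]

/-- **Example 1**: meta-signals are strictly more powerful than signaling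
matchings alone.  (i) The deterministic policy revealing the world and always
selecting `M₁` is a stable policy of expected utility `1`;  (ii) every stable
policy whose meta-signals consist of the selected matching alone has expected
utility strictly below `1`. -/
theorem metasignals_beat_matching_signals :
    (IsPolicy σex ∧ StablePublic μex vAex vBex σex ∧
      polU μex σex (fun s ω => uMatch uex s.2 ω) = 1) ∧
    (∀ σ : Fin 2 → (Fin 2 ≃ Fin 2) → ℝ,
      IsPolicy σ →
      (∀ M : Fin 2 ≃ Fin 2, 0 < sigPr μex σ M → StableAt vAex vBex M (post μex σ M)) →
      polU μex σ (fun M ω => uMatch uex M ω) < 1) := by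
  constructor
  · refine ⟨?_, ?_, ?_⟩
    · intro ω
      refine ⟨fun s => ?_, ?_⟩
      · unfold σex; split <;> norm_num
      · simp [σex]
    · rintro ⟨g, M⟩ hs
      by_cases hM : M = M1
      · subst hM
        intro a b
        fin_cases g <;> fin_cases a <;> fin_cases b <;>
          simp [eVal, post, sigPr, σex, μex, vAex, vBex, M1, Fin.sum_univ_two,
            Prod.ext_iff] <;> norm_num
      · exfalso
        have : sigPr μex σex (g, M) = 0 := by
          simp [sigPr, σex, Fin.sum_univ_two, Prod.ext_iff, hM]
        rw [this] at hs; exact lt_irrefl 0 hs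
    · simp [polU, σex, μex, uMatch, uex, M1, Fin.sum_univ_two, ite_mul, one_mul,
        zero_mul]
      norm_num
      simp only [Fintype.sum_prod_type, Fin.sum_univ_two, sum_perm2, Prod.mk.injEq]
      norm_num
      simp only [Finset.filter_eq', Finset.mem_univ, if_true, Finset.card_singleton]
      norm_num
  · intro σ hpol hstab
    set e : Fin 2 ≃ Fin 2 := Equiv.refl (Fin 2) with he
    set w : Fin 2 ≃ Fin 2 := Equiv.swap 0 1 with hw
    have hue : ∀ ω, uMatch uex e ω = 1 := by
      intro ω; simp [uMatch, uex, Fin.sum_univ_two, he]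
    have huw : ∀ ω, uMatch uex w ω = 0 := by
      intro ω; simp [uMatch, uex, Fin.sum_univ_two, hw]
    have hsum : ∀ ω, σ ω e + σ ω w = 1 := by
      intro ω
      have := (hpol ω).2
      rwa [sum_perm2] at this
    have hnn : ∀ ω M, 0 ≤ σ ω M := fun ω => (hpol ω).1
    have hU : polU μex σ (fun M ω => uMatch uex M ω) = (σ 0 e + σ 1 e) / 2 := by
      simp only [polU, sum_perm2, ← he, ← hw, hue, huw, μex, Fin.sum_univ_two]
      ring
    by_contra h
    push_neg at h
    rw [hU] at h
    have h0le : σ 0 e ≤ 1 := by have := hsum 0; have := hnn 0 w; linarith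
    have h1le : σ 1 e ≤ 1 := by have := hsum 1; have := hnn 1 w; linarith
    have h0 : σ 0 e = 1 := by linarith
    have h1 : σ 1 e = 1 := by linarith
    have hpr : sigPr μex σ e = 1 := by
      simp [sigPr, μex, Fin.sum_univ_two, h0, h1]; norm_num
    have hst := hstab e (by rw [hpr]; norm_num) 0 1
    rcases hst with hst | hst <;>
      [skip; skip] <;>
      · simp [eVal, post, hpr, μex, vAex, vBex, Fin.sum_univ_two, h0, h1, he] at hst
        rw [← he, hpr, h0, h1] at hst
        norm_num at hst

end MP
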